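/- arXiv:1312.7663 — 3 statements merged into one kernel-verified Lean document; each statement's English description precedes it below -/
import Mathlib

section
/- Mean equicontinuity is preserved under factor maps: if π: (X,T) → (Y,S) is a factor map (continuous surjection with π∘T = S∘π) between dynamical systems on compact metric spaces and (X,T) is mean equicontinuous, then (Y,S) is mean equicontinuous. -/
open Filter Topology MeasureTheory
open scoped Classical

noncomputable def avgDist {Z : Type*} [MetricSpace Z] (R : Z → Z) (x y : Z) (n : ℕ) : ℝ :=
  (n : ℝ)⁻¹ * ∑ i ∈ Finset.range n, dist (R^[i] x) (R^[i] y)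

def MeanEquicontinuous {Z : Type*} [MetricSpace Z] (R : Z → Z) : Prop :=
  ∀ ε > 0, ∃ δ > 0, ∀ x y : Z, dist x y < δ →
    Filter.limsup (avgDist R x y) Filter.atTop < ε

def MeanEqPtAt {Z : Type*} [MetricSpace Z] (R : Z → Z) (x : Z) : Prop :=
  ∀ ε > 0, ∃ δ > 0, ∀ y : Z, dist x y < δ →
    Filter.limsup (avgDist R x y) Filter.atTop < ε

def MeanSensitive {Z : Type*} [MetricSpace Z] (R : Z → Z) : Prop :=
  ∃ δ > 0, ∀ x : Z, ∀ ε > 0, ∃ y : Z, dist x y < ε ∧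
    δ < Filter.limsup (avgDist R x y) Filter.atTop

lemma avgDist_nonneg {Z : Type*} [MetricSpace Z] (R : Z → Z) (x y : Z) (n : ℕ) :
    0 ≤ avgDist R x y n :=
  mul_nonneg (inv_nonneg.2 n.cast_nonneg) (Finset.sum_nonneg fun _ _ => dist_nonneg)

lemma avgDist_le_of_forall {Z : Type*} [MetricSpace Z] (R : Z → Z) (x y : Z) {M : ℝ}
    (hM : 0 ≤ M) (hd : ∀ a b : Z, dist a b ≤ M) (n : ℕ) : avgDist R x y n ≤ M := by
  rcases Nat.eq_zero_or_pos n with rfl | hn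
  · simp [avgDist, hM]
  · have hsum : ∑ i ∈ Finset.range n, dist (R^[i] x) (R^[i] y) ≤ (n : ℝ) * M := by
      calc ∑ i ∈ Finset.range n, dist (R^[i] x) (R^[i] y)
          ≤ ∑ _i ∈ Finset.range n, M := Finset.sum_le_sum fun i _ => hd _ _
        _ = (n : ℝ) * M := by simp [mul_comm]
    have hn' : (0 : ℝ) < n := by exact_mod_cast hn
    calc avgDist R x y n ≤ (n : ℝ)⁻¹ * ((n : ℝ) * M) :=
          mul_le_mul_of_nonneg_left hsum (inv_nonneg.2 hn'.le)
      _ = M := by field_simp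

lemma avgDist_triangle {Z : Type*} [MetricSpace Z] (R : Z → Z) (x y z : Z) (n : ℕ) :
    avgDist R x z n ≤ avgDist R x y n + avgDist R y z n := by
  unfold avgDist
  rw [← mul_add, ← Finset.sum_add_distrib]
  exact mul_le_mul_of_nonneg_left
    (Finset.sum_le_sum fun i _ => dist_triangle _ (R^[i] y) _)
    (inv_nonneg.2 n.cast_nonneg)

theorem meanEquicontinuous_factor
    {X Y : Type*} [MetricSpace X] [CompactSpace X] [MetricSpace Y] [CompactSpace Y]
    (T : X → X) (S : Y → Y) (hT : Continuous T) (hS : Continuous S)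
    (π : X → Y) (hπ : Continuous π) (hsurj : Function.Surjective π)
    (hcomm : π ∘ T = S ∘ π)
    (h : MeanEquicontinuous T) :
    MeanEquicontinuous S := by
  -- global distance bounds
  obtain ⟨MX₀, hMX₀⟩ := Metric.isBounded_iff.mp (isCompact_univ : IsCompact (Set.univ : Set X)).isBounded
  obtain ⟨MY₀, hMY₀⟩ := Metric.isBounded_iff.mp (isCompact_univ : IsCompact (Set.univ : Set Y)).isBounded
  set MX : ℝ := max MX₀ 0 with hMXdef
  set MY : ℝ := max MY₀ 0 with hMYdef
  have hMX : 0 ≤ MX := le_max_right _ _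
  have hMY : 0 ≤ MY := le_max_right _ _
  have hdX : ∀ a b : X, dist a b ≤ MX := fun a b =>
    le_trans (hMX₀ (Set.mem_univ a) (Set.mem_univ b)) (le_max_left _ _)
  have hdY : ∀ a b : Y, dist a b ≤ MY := fun a b =>
    le_trans (hMY₀ (Set.mem_univ a) (Set.mem_univ b)) (le_max_left _ _)
  have hbdX : ∀ x x' : X, IsBoundedUnder (· ≤ ·) atTop (avgDist T x x') := fun x x' =>
    isBoundedUnder_of ⟨MX, fun n => avgDist_le_of_forall T x x' hMX hdX n⟩
  have hbdY : ∀ y y' : Y, IsBoundedUnder (· ≤ ·) atTop (avgDist S y y') := fun y y' =>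
    isBoundedUnder_of ⟨MY, fun n => avgDist_le_of_forall S y y' hMY hdY n⟩
  have hcobdY : ∀ y y' : Y, IsCoboundedUnder (· ≤ ·) atTop (avgDist S y y') := fun y y' =>
    IsBoundedUnder.isCoboundedUnder_le
      (isBoundedUnder_of ⟨0, fun n => avgDist_nonneg S y y' n⟩)
  -- semiconjugacy iterated
  have hsem : ∀ (i : ℕ) (a : X), S^[i] (π a) = π (T^[i] a) := by
    intro i a
    have hsc : Function.Semiconj π T S := fun b => congrFun hcomm b
    exact ((hsc.iterate_right i) a).symm
  -- Key lemma A
  have keyA : ∀ ε > (0:ℝ), ∃ δ > (0:ℝ), ∀ x x' : X, dist x x' < δ →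
      Filter.limsup (avgDist S (π x) (π x')) Filter.atTop < ε := by
    intro ε hε
    have huc : UniformContinuous π := CompactSpace.uniformContinuous_of_continuous hπ
    rw [Metric.uniformContinuous_iff] at huc
    obtain ⟨η, hη0, hη⟩ := huc (ε/4) (by positivity)
    obtain ⟨C, hC0, hCη⟩ : ∃ C : ℝ, 0 < C ∧ MY ≤ C * η := by
      refine ⟨MY/η + 1, by positivity, ?_⟩
      rw [add_mul, div_mul_cancel₀ _ hη0.ne']
      nlinarith
    have hptw : ∀ a b : X, dist (π a) (π b) ≤ ε/4 + C * dist a b := by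
      intro a b
      rcases lt_or_ge (dist a b) η with hab | hab
      · have h1 := (hη hab).le
        have h2 : 0 ≤ C * dist a b := mul_nonneg hC0.le dist_nonneg
        linarith
      · have h1 : dist (π a) (π b) ≤ MY := hdY _ _
        have h3 : C * η ≤ C * dist a b := mul_le_mul_of_nonneg_left hab hC0.le
        nlinarith
    obtain ⟨δ, hδ0, hδ⟩ := h (ε/(4*C)) (by positivity)
    refine ⟨δ, hδ0, fun x x' hxx' => ?_⟩
    have hls := hδ x x' hxx'
    have hev : ∀ᶠ n in atTop, avgDist T x x' n < ε/(4*C) :=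
      eventually_lt_of_limsup_lt hls (hbdX x x')
    have hptw2 : ∀ n, avgDist S (π x) (π x') n ≤ ε/4 + C * avgDist T x x' n := by
      intro n
      rcases Nat.eq_zero_or_pos n with rfl | hn
      · simp [avgDist]
        positivity
      · have hn' : (0:ℝ) < n := by exact_mod_cast hn
        have hsum : ∑ i ∈ Finset.range n, dist (S^[i] (π x)) (S^[i] (π x'))
            ≤ (n : ℝ) * (ε/4) + C * ∑ i ∈ Finset.range n, dist (T^[i] x) (T^[i] x') := by
          rw [Finset.mul_sum]
          calc ∑ i ∈ Finset.range n, dist (S^[i] (π x)) (S^[i] (π x'))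
              ≤ ∑ i ∈ Finset.range n, (ε/4 + C * dist (T^[i] x) (T^[i] x')) := by
                refine Finset.sum_le_sum fun i _ => ?_
                rw [hsem i x, hsem i x']
                exact hptw _ _
            _ = (n : ℝ) * (ε/4) + ∑ i ∈ Finset.range n, C * dist (T^[i] x) (T^[i] x') := by
                rw [Finset.sum_add_distrib]
                simp [mul_comm]
        have : avgDist S (π x) (π x') n ≤
            (n : ℝ)⁻¹ * ((n : ℝ) * (ε/4) + C * ∑ i ∈ Finset.range n, dist (T^[i] x) (T^[i] x')) :=
          mul_le_mul_of_nonneg_left hsum (inv_nonneg.2 hn'.le)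
        calc avgDist S (π x) (π x') n
            ≤ (n : ℝ)⁻¹ * ((n : ℝ) * (ε/4) + C * ∑ i ∈ Finset.range n, dist (T^[i] x) (T^[i] x')) := this
          _ = ε/4 + C * avgDist T x x' n := by
              unfold avgDist; field_simp
    have hev2 : ∀ᶠ n in atTop, avgDist S (π x) (π x') n ≤ ε/2 := by
      filter_upwards [hev] with n hn
      have := hptw2 n
      have h3 : C * avgDist T x x' n < C * (ε/(4*C)) :=
        mul_lt_mul_of_pos_left hn hC0
      have h4 : C * (ε/(4*C)) = ε/4 := by field_simp
      linarith
    have := limsup_le_of_le (hcobdY (π x) (π x')) hev2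
    linarith
  -- main proof by contradiction
  intro ε hε
  by_contra hcon
  push_neg at hcon
  have hcon' : ∀ n : ℕ, ∃ y y' : Y, dist y y' < 1/(n+1) ∧
      ε ≤ Filter.limsup (avgDist S y y') Filter.atTop := by
    intro n
    obtain ⟨y, y', hd, hl⟩ := hcon (1/(n+1)) (by positivity)
    exact ⟨y, y', hd, hl⟩
  choose ys ys' hds hls using hcon'
  choose xs hxs using fun n => hsurj (ys n)
  choose xs' hxs' using fun n => hsurj (ys' n)
  obtain ⟨z, φ, hφ, hz⟩ := CompactSpace.tendsto_subseq (X := X × X) (fun n => (xs n, xs' n))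
  have h1 : Tendsto (fun n => xs (φ n)) atTop (𝓝 z.1) :=
    (continuous_fst.tendsto z).comp hz
  have h2 : Tendsto (fun n => xs' (φ n)) atTop (𝓝 z.2) :=
    (continuous_snd.tendsto z).comp hz
  have hy1 : Tendsto (fun n => ys (φ n)) atTop (𝓝 (π z.1)) := by
    have := (hπ.tendsto z.1).comp h1
    simpa only [Function.comp_def, hxs] using this
  have hy2 : Tendsto (fun n => ys' (φ n)) atTop (𝓝 (π z.2)) := by
    have := (hπ.tendsto z.2).comp h2
    simpa only [Function.comp_def, hxs'] using this
  -- dist (ys (φ n)) (ys' (φ n)) → 0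
  have hd0 : Tendsto (fun n => dist (ys (φ n)) (ys' (φ n))) atTop (𝓝 0) := by
    have hb : ∀ n : ℕ, dist (ys (φ n)) (ys' (φ n)) ≤ 1/(n+1) := by
      intro n
      refine le_trans (hds (φ n)).le ?_
      have hle : n ≤ φ n := hφ.le_apply
      have : (n : ℝ) + 1 ≤ (φ n : ℝ) + 1 := by
        exact_mod_cast add_le_add_left (Nat.cast_le.2 hle) 1
      exact one_div_le_one_div_of_le (by positivity) this
    have ht : Tendsto (fun n : ℕ => 1/((n:ℝ)+1)) atTop (𝓝 0) :=
      tendsto_one_div_add_atTop_nhds_zero_nat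
    exact squeeze_zero (fun n => dist_nonneg) hb ht
  have hy2' : Tendsto (fun n => ys' (φ n)) atTop (𝓝 (π z.1)) := by
    apply hy1.congr_dist
    simpa [dist_comm] using hd0
  have hzz : π z.1 = π z.2 := tendsto_nhds_unique hy2' hy2
  obtain ⟨δ, hδ0, hδ⟩ := keyA (ε/3) (by positivity)
  have hev1 : ∀ᶠ n in atTop, dist (xs (φ n)) z.1 < δ := by
    have := (Metric.tendsto_atTop.mp h1) δ hδ0
    obtain ⟨N, hN⟩ := this
    exact eventually_atTop.2 ⟨N, fun n hn => hN n hn⟩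
  have hev2 : ∀ᶠ n in atTop, dist (xs' (φ n)) z.2 < δ := by
    have := (Metric.tendsto_atTop.mp h2) δ hδ0
    obtain ⟨N, hN⟩ := this
    exact eventually_atTop.2 ⟨N, fun n hn => hN n hn⟩
  obtain ⟨N, hN1, hN2⟩ := (hev1.and hev2).exists
  -- apply keyA
  have t1 : Filter.limsup (avgDist S (ys (φ N)) (π z.1)) Filter.atTop < ε/3 := by
    have := hδ (xs (φ N)) z.1 hN1
    rwa [hxs] at this
  have t2 : Filter.limsup (avgDist S (π z.2) (ys' (φ N))) Filter.atTop < ε/3 := by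
    have := hδ z.2 (xs' (φ N)) (by rwa [dist_comm])
    rwa [hxs'] at this
  have e1 : ∀ᶠ n in atTop, avgDist S (ys (φ N)) (π z.1) n < ε/3 :=
    eventually_lt_of_limsup_lt t1 (hbdY _ _)
  have e2 : ∀ᶠ n in atTop, avgDist S (π z.2) (ys' (φ N)) n < ε/3 :=
    eventually_lt_of_limsup_lt t2 (hbdY _ _)
  have e3 : ∀ᶠ n in atTop, avgDist S (ys (φ N)) (ys' (φ N)) n ≤ 2*ε/3 := by
    filter_upwards [e1, e2] with n hn1 hn2
    have htri : avgDist S (ys (φ N)) (ys' (φ N)) n ≤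
        avgDist S (ys (φ N)) (π z.1) n + avgDist S (π z.1) (ys' (φ N)) n :=
      avgDist_triangle S _ _ _ n
    rw [← hzz] at hn2
    linarith
  have hfin : Filter.limsup (avgDist S (ys (φ N)) (ys' (φ N))) Filter.atTop ≤ 2*ε/3 :=
    limsup_le_of_le (hcobdY _ _) e3
  have := hls (φ N)
  linarith
end

section
/- If (X,T) is transitive and some transitive point is a mean sensitive point, then (X,T) is mean sensitive. -/
open Filter Topology MeasureTheory
open scoped Classical

lemma avgDist_le {Z : Type*} [MetricSpace Z] (R : Z → Z) {C : ℝ} (hC0 : 0 ≤ C)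
    (hC : ∀ p q : Z, dist p q ≤ C) (x y : Z) (n : ℕ) : avgDist R x y n ≤ C := by
  unfold avgDist
  rcases Nat.eq_zero_or_pos n with rfl | hn
  · simpa using hC0
  · have h1 : ∑ i ∈ Finset.range n, dist (R^[i] x) (R^[i] y) ≤ n * C := by
      calc ∑ i ∈ Finset.range n, dist (R^[i] x) (R^[i] y)
          ≤ ∑ _i ∈ Finset.range n, C := Finset.sum_le_sum fun i _ => hC _ _
        _ = n * C := by simp [mul_comm]
    have hn' : (0:ℝ) < (n:ℝ) := by exact_mod_cast hn
    calc (n : ℝ)⁻¹ * ∑ i ∈ Finset.range n, dist (R^[i] x) (R^[i] y)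
        ≤ (n : ℝ)⁻¹ * (n * C) := by
          apply mul_le_mul_of_nonneg_left h1 (by positivity)
      _ = C := by field_simp

lemma avgDist_bddAbove {Z : Type*} [MetricSpace Z] (R : Z → Z) {C : ℝ} (hC0 : 0 ≤ C)
    (hC : ∀ p q : Z, dist p q ≤ C) (x y : Z) :
    IsBoundedUnder (· ≤ ·) atTop (avgDist R x y) :=
  isBoundedUnder_of ⟨C, fun n => avgDist_le R hC0 hC x y n⟩

lemma avgDist_bddBelow {Z : Type*} [MetricSpace Z] (R : Z → Z) (x y : Z) :
    IsBoundedUnder (· ≥ ·) atTop (avgDist R x y) :=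
  isBoundedUnder_of ⟨0, fun n => avgDist_nonneg R x y n⟩

/-- Shifting both points along the orbit does not decrease the limsup of average distances. -/
lemma limsup_avgDist_shift {Z : Type*} [MetricSpace Z] (R : Z → Z) {C : ℝ} (hC0 : 0 ≤ C)
    (hC : ∀ p q : Z, dist p q ≤ C) (x y : Z) (n : ℕ) :
    limsup (avgDist R x y) atTop ≤ limsup (avgDist R (R^[n] x) (R^[n] y)) atTop := by
  set S : ℝ := ∑ i ∈ Finset.range n, dist (R^[i] x) (R^[i] y) with hS
  have hS0 : 0 ≤ S := Finset.sum_nonneg fun i _ => dist_nonneg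
  set g : ℕ → ℝ := avgDist R (R^[n] x) (R^[n] y) with hg
  set h : ℕ → ℝ := fun m => S * (m : ℝ)⁻¹ with hh
  have hh0 : Tendsto h atTop (nhds 0) := by
    have := tendsto_inv_atTop_zero.comp (tendsto_natCast_atTop_atTop (R := ℝ))
    simpa [hh] using this.const_mul S
  -- pointwise estimate, eventually
  have key : ∀ m : ℕ, 1 ≤ m → avgDist R x y (m + n) ≤ g m + h m := by
    intro m hm
    have hm' : (0:ℝ) < (m:ℝ) := by exact_mod_cast hm
    have hsplit : ∑ i ∈ Finset.range (n + m), dist (R^[i] x) (R^[i] y)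
        = S + ∑ i ∈ Finset.range m, dist (R^[i] (R^[n] x)) (R^[i] (R^[n] y)) := by
      rw [Finset.sum_range_add]
      congr 1
      refine Finset.sum_congr rfl fun i _ => ?_
      rw [add_comm n i, Function.iterate_add_apply, Function.iterate_add_apply]
    have hinv : ((m + n : ℕ) : ℝ)⁻¹ ≤ (m : ℝ)⁻¹ := by
      apply inv_anti₀ hm'
      exact_mod_cast Nat.le_add_right m n
    have hnonneg : 0 ≤ S + ∑ i ∈ Finset.range m, dist (R^[i] (R^[n] x)) (R^[i] (R^[n] y)) := by
      positivity
    calc avgDist R x y (m + n)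
        = ((m + n : ℕ) : ℝ)⁻¹ *
            (S + ∑ i ∈ Finset.range m, dist (R^[i] (R^[n] x)) (R^[i] (R^[n] y))) := by
          unfold avgDist
          rw [add_comm m n, hsplit]
      _ ≤ (m : ℝ)⁻¹ *
            (S + ∑ i ∈ Finset.range m, dist (R^[i] (R^[n] x)) (R^[i] (R^[n] y))) := by
          exact mul_le_mul_of_nonneg_right hinv hnonneg
      _ = g m + h m := by
          simp only [hg, hh]
          unfold avgDist
          ring
  have hmap : limsup (avgDist R x y) atTop
      = limsup (fun m => avgDist R x y (m + n)) atTop := by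
    conv_lhs => rw [← map_add_atTop_eq_nat n]
    rw [← Filter.limsup_comp]
    rfl
  rw [hmap]
  have hgh_bdd : IsBoundedUnder (· ≤ ·) atTop (g + h) := by
    refine isBoundedUnder_of ⟨C + S, fun m => ?_⟩
    have h1 : g m ≤ C := avgDist_le R hC0 hC _ _ m
    have h2 : h m ≤ S := by
      rcases Nat.eq_zero_or_pos m with rfl | hm
      · simp [hh, hS0]
      · have hm' : (0:ℝ) < (m:ℝ) := by exact_mod_cast hm
        have : (m:ℝ)⁻¹ ≤ 1 := by
          rw [inv_le_one_iff₀]; right; exact_mod_cast hm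
        calc S * (m:ℝ)⁻¹ ≤ S * 1 := by nlinarith
          _ = S := by ring
    exact add_le_add h1 h2
  have hle : limsup (fun m => avgDist R x y (m + n)) atTop ≤ limsup (g + h) atTop := by
    refine limsup_le_limsup ?_ ?_ ?_
    · filter_upwards [eventually_ge_atTop 1] with m hm
      exact key m hm
    · exact (isBoundedUnder_of
        ⟨0, fun m => avgDist_nonneg R x y (m + n)⟩ :
          IsBoundedUnder (· ≥ ·) atTop fun m => avgDist R x y (m + n)).isCoboundedUnder_le
    · exact hgh_bdd
  have hadd : limsup (g + h) atTop ≤ limsup g atTop + limsup h atTop := by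
    apply limsup_add_le
    · exact avgDist_bddBelow R _ _
    · exact avgDist_bddAbove R hC0 hC _ _
    · exact hh0.isCoboundedUnder_le
    · exact hh0.isBoundedUnder_le
  have hh_limsup : limsup h atTop = 0 := hh0.limsup_eq
  calc limsup (fun m => avgDist R x y (m + n)) atTop
      ≤ limsup (g + h) atTop := hle
    _ ≤ limsup g atTop + limsup h atTop := hadd
    _ = limsup g atTop := by rw [hh_limsup, add_zero]

theorem meanSensitive_of_transitive_meanSensitive_point
    {X : Type*} [MetricSpace X] [CompactSpace X] (T : X → X) (hT : Continuous T)
    (x : X) (hx : Dense (Set.range fun n : ℕ => T^[n] x))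
    (hsen : ∃ δ > 0, ∀ ε > 0, ∃ y : X, dist x y < ε ∧
      δ < Filter.limsup (avgDist T x y) Filter.atTop) :
    MeanSensitive T := by
  -- global bound on distances
  obtain ⟨C, hCbound⟩ := Metric.isBounded_iff.1 (isCompact_univ (X := X)).isBounded
  have hC : ∀ p q : X, dist p q ≤ C := fun p q =>
    hCbound (Set.mem_univ p) (Set.mem_univ q)
  have hC0 : 0 ≤ C := le_trans dist_nonneg (hC x x)
  obtain ⟨δ, hδ, hs⟩ := hsen
  refine ⟨δ / 2, by positivity, fun z ε hε => ?_⟩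
  -- find an orbit point near z
  obtain ⟨p, hpmem, hpz⟩ := hx.exists_dist_lt z (half_pos hε)
  obtain ⟨n, rfl⟩ := hpmem
  -- continuity of T^[n] at x
  have hcont : ContinuousAt (T^[n]) x := (hT.iterate n).continuousAt
  rw [Metric.continuousAt_iff] at hcont
  obtain ⟨η, hη, hcont⟩ := hcont (ε / 2) (half_pos hε)
  obtain ⟨y, hxy, hlim⟩ := hs η hη
  set a := T^[n] x with ha
  set b := T^[n] y with hb
  have hab : dist a b < ε / 2 := by
    have := hcont (show dist y x < η by rwa [dist_comm])
    rwa [dist_comm]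
  have hza : dist z a < ε / 2 := by
    rw [ha]; exact hpz
  have hzb : dist z b < ε := by
    calc dist z b ≤ dist z a + dist a b := dist_triangle z a b
      _ < ε / 2 + ε / 2 := add_lt_add hza hab
      _ = ε := add_halves ε
  -- limsup avg(a,b) > δ
  have h1 : δ < limsup (avgDist T a b) atTop :=
    lt_of_lt_of_le hlim (limsup_avgDist_shift T hC0 hC x y n)
  -- triangle inequality on averages
  have h2 : ∀ m, avgDist T a b m ≤ avgDist T z a m + avgDist T z b m := by
    intro m
    unfold avgDist
    rw [← mul_add, ← Finset.sum_add_distrib]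
    apply mul_le_mul_of_nonneg_left _ (by positivity)
    exact Finset.sum_le_sum fun i _ => dist_triangle_left _ _ _
  have h3 : limsup (avgDist T a b) atTop
      ≤ limsup (avgDist T z a) atTop + limsup (avgDist T z b) atTop := by
    calc limsup (avgDist T a b) atTop
        ≤ limsup (avgDist T z a + avgDist T z b) atTop := by
          refine limsup_le_limsup (Eventually.of_forall h2) ?_ ?_
          · exact (avgDist_bddBelow T a b).isCoboundedUnder_le
          · exact isBoundedUnder_of ⟨C + C, fun m => add_le_add
              (avgDist_le T hC0 hC z a m) (avgDist_le T hC0 hC z b m)⟩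
      _ ≤ limsup (avgDist T z a) atTop + limsup (avgDist T z b) atTop := by
          apply limsup_add_le
          · exact avgDist_bddBelow T _ _
          · exact avgDist_bddAbove T hC0 hC _ _
          · exact (avgDist_bddBelow T _ _).isCoboundedUnder_le
          · exact avgDist_bddAbove T hC0 hC _ _
  rcases le_or_gt (limsup (avgDist T z a) atTop) (δ / 2) with hcase | hcase
  · exact ⟨b, hzb, by linarith⟩
  · exact ⟨a, lt_trans hza (by linarith), hcase⟩
end

section
/- A minimal dynamical system is either mean equicontinuous or mean sensitive. -/
open Filter Topology MeasureTheory
open scoped Classical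

section Aux

variable {X : Type*} [MetricSpace X] [CompactSpace X] (T : X → X)

lemma avgDist_nonneg_s16 (x y : X) (n : ℕ) : 0 ≤ avgDist T x y n :=
  mul_nonneg (inv_nonneg.2 (Nat.cast_nonneg n))
    (Finset.sum_nonneg fun _ _ => dist_nonneg)

lemma avgDist_comm (x y : X) : avgDist T x y = avgDist T y x := by
  funext n; simp [avgDist, dist_comm]

lemma avgDist_le_diam (x y : X) (n : ℕ) :
    avgDist T x y n ≤ Metric.diam (Set.univ : Set X) := by
  set D := Metric.diam (Set.univ : Set X) with hD
  have hD0 : 0 ≤ D := Metric.diam_nonneg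
  rcases Nat.eq_zero_or_pos n with rfl | hn
  · simpa [avgDist] using hD0
  have hsum : ∑ i ∈ Finset.range n, dist (T^[i] x) (T^[i] y) ≤ n * D := by
    calc ∑ i ∈ Finset.range n, dist (T^[i] x) (T^[i] y)
        ≤ ∑ _i ∈ Finset.range n, D :=
          Finset.sum_le_sum fun i _ =>
            Metric.dist_le_diam_of_mem' isCompact_univ.isBounded.ediam_ne_top
              (Set.mem_univ _) (Set.mem_univ _)
      _ = n * D := by simp [Finset.sum_const, nsmul_eq_mul]
  have hn' : (0:ℝ) < n := by exact_mod_cast hn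
  calc avgDist T x y n ≤ (n:ℝ)⁻¹ * (n * D) :=
        mul_le_mul_of_nonneg_left hsum (inv_nonneg.2 hn'.le)
    _ = D := by field_simp

lemma avgDist_bddLE (x y : X) :
    IsBoundedUnder (· ≤ ·) atTop (avgDist T x y) :=
  isBoundedUnder_of ⟨Metric.diam (Set.univ : Set X), avgDist_le_diam T x y⟩

lemma avgDist_bddGE (x y : X) :
    IsBoundedUnder (· ≥ ·) atTop (avgDist T x y) :=
  isBoundedUnder_of ⟨0, avgDist_nonneg_s16 T x y⟩

lemma limsupAvg_triangle (x y z : X) :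
    limsup (avgDist T x z) atTop
      ≤ limsup (avgDist T x y) atTop + limsup (avgDist T y z) atTop := by
  have h1 : avgDist T x z ≤ᶠ[atTop] (avgDist T x y + avgDist T y z) := by
    refine Eventually.of_forall fun n => ?_
    simp only [avgDist, Pi.add_apply]
    rw [← mul_add, ← Finset.sum_add_distrib]
    exact mul_le_mul_of_nonneg_left
      (Finset.sum_le_sum fun i _ => dist_triangle _ _ _)
      (inv_nonneg.2 (Nat.cast_nonneg n))
  calc limsup (avgDist T x z) atTop
      ≤ limsup (avgDist T x y + avgDist T y z) atTop :=
        limsup_le_limsup h1 ((avgDist_bddGE T x z).isCoboundedUnder_le)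
          (isBoundedUnder_of ⟨2 * Metric.diam (Set.univ : Set X), fun n => by
            have := avgDist_le_diam T x y n
            have := avgDist_le_diam T y z n
            simp only [Pi.add_apply]; linarith⟩)
    _ ≤ _ := limsup_add_le (avgDist_bddGE T x y) (avgDist_bddLE T x y)
          ((avgDist_bddGE T y z).isCoboundedUnder_le) (avgDist_bddLE T y z)

lemma limsupAvg_shift (x y : X) (n : ℕ) :
    limsup (avgDist T x y) atTop
      ≤ limsup (avgDist T (T^[n] x) (T^[n] y)) atTop := by
  set D := Metric.diam (Set.univ : Set X) with hD
  have hD0 : 0 ≤ D := Metric.diam_nonneg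
  set u : ℕ → ℝ := fun m => (n * D) * (m:ℝ)⁻¹ with hu
  set g := avgDist T (T^[n] x) (T^[n] y) with hg
  have hu0 : ∀ m, 0 ≤ u m := fun m =>
    mul_nonneg (mul_nonneg (Nat.cast_nonneg n) hD0) (inv_nonneg.2 (Nat.cast_nonneg m))
  have huB : ∀ m, u m ≤ n * D := by
    intro m
    rcases Nat.eq_zero_or_pos m with rfl | hm
    · simpa [hu] using mul_nonneg (Nat.cast_nonneg n) hD0
    · have h1 : (m:ℝ)⁻¹ ≤ 1 := by
        rw [inv_le_one_iff₀]; right; exact_mod_cast hm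
      calc u m ≤ (n * D) * 1 :=
            mul_le_mul_of_nonneg_left h1 (mul_nonneg (Nat.cast_nonneg n) hD0)
        _ = n * D := mul_one _
  have key : avgDist T x y ≤ᶠ[atTop] (u + g) := by
    filter_upwards [eventually_ge_atTop n] with m hm
    obtain ⟨k, rfl⟩ := Nat.exists_eq_add_of_le hm
    have hsplit : ∑ i ∈ Finset.range (n + k), dist (T^[i] x) (T^[i] y)
        = (∑ i ∈ Finset.range n, dist (T^[i] x) (T^[i] y))
          + ∑ i ∈ Finset.range k, dist (T^[i] (T^[n] x)) (T^[i] (T^[n] y)) := by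
      rw [Finset.sum_range_add]
      congr 1
      refine Finset.sum_congr rfl fun i _ => ?_
      rw [add_comm n i, Function.iterate_add_apply, Function.iterate_add_apply]
    have h1 : ∑ i ∈ Finset.range n, dist (T^[i] x) (T^[i] y) ≤ n * D :=
      calc ∑ i ∈ Finset.range n, dist (T^[i] x) (T^[i] y)
          ≤ ∑ _i ∈ Finset.range n, D :=
            Finset.sum_le_sum fun i _ =>
              Metric.dist_le_diam_of_mem' isCompact_univ.isBounded.ediam_ne_top
                (Set.mem_univ _) (Set.mem_univ _)
        _ = n * D := by simp [Finset.sum_const, nsmul_eq_mul]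
    have h2 : ∑ i ∈ Finset.range k, dist (T^[i] (T^[n] x)) (T^[i] (T^[n] y))
        ≤ ∑ i ∈ Finset.range (n + k), dist (T^[i] (T^[n] x)) (T^[i] (T^[n] y)) :=
      Finset.sum_le_sum_of_subset_of_nonneg
        (Finset.range_subset_range.2 (Nat.le_add_left k n)) (fun _ _ _ => dist_nonneg)
    have hmono : ∑ i ∈ Finset.range (n + k), dist (T^[i] x) (T^[i] y)
        ≤ n * D + ∑ i ∈ Finset.range (n + k), dist (T^[i] (T^[n] x)) (T^[i] (T^[n] y)) := by
      rw [hsplit]; exact add_le_add h1 h2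
    show avgDist T x y (n + k) ≤ u (n + k) + g (n + k)
    have hinv : (0:ℝ) ≤ ((n + k : ℕ) : ℝ)⁻¹ := inv_nonneg.2 (Nat.cast_nonneg _)
    calc avgDist T x y (n + k)
        ≤ ((n + k : ℕ) : ℝ)⁻¹ *
            (n * D + ∑ i ∈ Finset.range (n + k), dist (T^[i] (T^[n] x)) (T^[i] (T^[n] y))) :=
          mul_le_mul_of_nonneg_left hmono hinv
      _ = u (n + k) + g (n + k) := by
          simp only [hu, hg, avgDist]; ring
  have hu_tendsto : Tendsto u atTop (𝓝 0) := by
    have : Tendsto (fun m : ℕ => ((m:ℝ))⁻¹) atTop (𝓝 0) :=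
      tendsto_inv_atTop_zero.comp tendsto_natCast_atTop_atTop
    simpa [hu] using this.const_mul ((n : ℝ) * D)
  have hu_limsup : limsup u atTop = 0 := hu_tendsto.limsup_eq
  have hub_le : IsBoundedUnder (· ≤ ·) atTop u := isBoundedUnder_of ⟨n * D, huB⟩
  have hub_ge : IsBoundedUnder (· ≥ ·) atTop u := isBoundedUnder_of ⟨0, hu0⟩
  calc limsup (avgDist T x y) atTop
      ≤ limsup (u + g) atTop :=
        limsup_le_limsup key ((avgDist_bddGE T x y).isCoboundedUnder_le)
          (isBoundedUnder_of ⟨n * D + D, fun m => by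
            have := avgDist_le_diam T (T^[n] x) (T^[n] y) m
            have := huB m
            simp only [Pi.add_apply]; linarith⟩)
    _ ≤ limsup u atTop + limsup g atTop :=
        limsup_add_le hub_ge hub_le
          ((avgDist_bddGE T (T^[n] x) (T^[n] y)).isCoboundedUnder_le)
          (avgDist_bddLE T (T^[n] x) (T^[n] y))
    _ = limsup g atTop := by rw [hu_limsup, zero_add]

end Aux

theorem minimal_dichotomy_meanEq_or_meanSensitive
    {X : Type*} [MetricSpace X] [CompactSpace X] (T : X → X) (hT : Continuous T)
    (hmin : ∀ x : X, Dense (Set.range fun n : ℕ => T^[n] x)) :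
    MeanEquicontinuous T ∨ MeanSensitive T := by
  by_cases hsens : MeanSensitive T
  · exact Or.inr hsens
  left
  rw [MeanSensitive] at hsens
  push_neg at hsens
  intro ε hε
  obtain ⟨x₀, ε₀, hε₀, h₀⟩ := hsens (ε / 4) (by linarith)
  -- for every z, find an open nbhd on which pairs have small limsup avgDist
  have hnbhd : ∀ z : X, ∃ U : Set X, IsOpen U ∧ z ∈ U ∧
      ∀ y₁ ∈ U, ∀ y₂ ∈ U, limsup (avgDist T y₁ y₂) atTop ≤ ε / 2 := by
    intro z
    obtain ⟨n, hn⟩ := (hmin z).exists_dist_lt x₀ hε₀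
    simp only [Set.mem_range] at hn
    obtain ⟨⟨m, rfl⟩, hdist⟩ := hn
    refine ⟨(T^[m]) ⁻¹' (Metric.ball x₀ ε₀),
      (Metric.isOpen_ball).preimage (hT.iterate m), ?_, ?_⟩
    · simpa [Metric.mem_ball, dist_comm] using hdist
    · intro y₁ hy₁ y₂ hy₂
      have hb₁ : dist x₀ (T^[m] y₁) < ε₀ := by
        simpa [Metric.mem_ball, dist_comm] using hy₁
      have hb₂ : dist x₀ (T^[m] y₂) < ε₀ := by
        simpa [Metric.mem_ball, dist_comm] using hy₂
      have h₁ := h₀ (T^[m] y₁) hb₁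
      have h₂ := h₀ (T^[m] y₂) hb₂
      have htri : limsup (avgDist T (T^[m] y₁) (T^[m] y₂)) atTop
          ≤ limsup (avgDist T (T^[m] y₁) x₀) atTop
            + limsup (avgDist T x₀ (T^[m] y₂)) atTop :=
        limsupAvg_triangle T _ _ _
      rw [avgDist_comm T (T^[m] y₁) x₀] at htri
      have := limsupAvg_shift T y₁ y₂ m
      linarith
  choose U hUopen hUmem hUsmall using hnbhd
  obtain ⟨δ, hδ, hball⟩ := lebesgue_number_lemma_of_metric isCompact_univ hUopen
    (fun x _ => Set.mem_iUnion.2 ⟨x, hUmem x⟩)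
  refine ⟨δ, hδ, fun x y hxy => ?_⟩
  obtain ⟨z, hz⟩ := hball x (Set.mem_univ x)
  have hx : x ∈ U z := hz (Metric.mem_ball_self hδ)
  have hy : y ∈ U z := hz (by simpa [Metric.mem_ball, dist_comm] using hxy)
  exact lt_of_le_of_lt (hUsmall z x hx y hy) (by linarith)
end
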